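/- arXiv:2309.00478 — 10 statements merged into one kernel-verified Lean document; each statement's English description precedes it below -/
import Mathlib

section
/- A clone C on a set A is equationally additive (the union of any two algebraic sets of the same arity is algebraic) if and only if the quaternary relation Δ_A = {(x1,x2,x3,x4) ∈ A^4 : x1 = x2 or x3 = x4} is algebraic with respect to C. -/
/-- A clone on a set `A`: a family of finitary operations containing all
projections and closed under composition. -/
structure Clone (A : Type) where
  ops : ∀ n : ℕ, Set ((Fin n → A) → A)
  proj_mem : ∀ (n : ℕ) (i : Fin n), (fun x => x i) ∈ ops n
  comp_mem : ∀ (m n : ℕ) (f : (Fin n → A) → A) (g : Fin n → (Fin m → A) → A),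
      f ∈ ops n → (∀ i, g i ∈ ops m) → (fun x => f (fun i => g i x)) ∈ ops m

/-- `X ⊆ A^n` is algebraic w.r.t. a family of operations `F`: it is the solution
set of some system of equations between `n`-ary members of `F`. -/
def IsAlgSet {A : Type} (F : ∀ n : ℕ, Set ((Fin n → A) → A)) (n : ℕ)
    (X : Set (Fin n → A)) : Prop :=
  ∃ (I : Type) (p q : I → (Fin n → A) → A),
    (∀ i, p i ∈ F n) ∧ (∀ i, q i ∈ F n) ∧ X = {x | ∀ i, p i x = q i x}

/-- Equational additivity: unions of algebraic sets of the same arity are algebraic. -/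
def EqAdditive {A : Type} (F : ∀ n : ℕ, Set ((Fin n → A) → A)) : Prop :=
  ∀ (n : ℕ) (X Y : Set (Fin n → A)),
    IsAlgSet F n X → IsAlgSet F n Y → IsAlgSet F n (X ∪ Y)

/-- The quaternary relation `Δ_A`. -/
def Delta (A : Type) : Set (Fin 4 → A) := {x | x 0 = x 1 ∨ x 2 = x 3}
/-- A clone `C` on `A` is equationally additive if and only if `Δ_A` is
algebraic with respect to `C`. -/
theorem stmt1 {A : Type} (C : Clone A) :
    EqAdditive C.ops ↔ IsAlgSet C.ops 4 (Delta A) := by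
  constructor
  · intro h
    have h1 : IsAlgSet C.ops 4 {x | x 0 = x 1} :=
      ⟨Unit, fun _ x => x 0, fun _ x => x 1,
        fun _ => C.proj_mem 4 0, fun _ => C.proj_mem 4 1, by ext x; simp⟩
    have h2 : IsAlgSet C.ops 4 {x | x 2 = x 3} :=
      ⟨Unit, fun _ x => x 2, fun _ x => x 3,
        fun _ => C.proj_mem 4 2, fun _ => C.proj_mem 4 3, by ext x; simp⟩
    exact h 4 _ _ h1 h2
  · rintro ⟨J, f, g, hf, hg, hD⟩ n X Y ⟨I, p, q, hp, hq, hX⟩ ⟨K, r, s, hr, hs, hY⟩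
    refine ⟨I × K × J,
      fun m x => f m.2.2 ![p m.1 x, q m.1 x, r m.2.1 x, s m.2.1 x],
      fun m x => g m.2.2 ![p m.1 x, q m.1 x, r m.2.1 x, s m.2.1 x], ?_, ?_, ?_⟩
    · rintro ⟨i, k, j⟩
      exact C.comp_mem n 4 (f j) (fun l => fun x => ![p i x, q i x, r k x, s k x] l)
        (hf j) (by
          intro l
          fin_cases l
          · exact hp i
          · exact hq i
          · exact hr k
          · exact hs k)
    · rintro ⟨i, k, j⟩
      exact C.comp_mem n 4 (g j) (fun l => fun x => ![p i x, q i x, r k x, s k x] l)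
        (hg j) (by
          intro l
          fin_cases l
          · exact hp i
          · exact hq i
          · exact hr k
          · exact hs k)
    · ext x
      have hdelta : ∀ v : Fin 4 → A, (v 0 = v 1 ∨ v 2 = v 3) ↔ ∀ j, f j v = g j v := by
        intro v
        have : v ∈ Delta A ↔ v ∈ {x | ∀ j, f j x = g j x} := by rw [hD]
        simpa [Delta] using this
      constructor
      · rintro (hx | hx)
        · rw [hX] at hx
          rintro ⟨i, k, j⟩
          exact (hdelta _).mp (Or.inl (by simpa using hx i)) j
        · rw [hY] at hx
          rintro ⟨i, k, j⟩
          exact (hdelta _).mp (Or.inr (by simpa using hx k)) j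
      · intro hall
        by_cases hx : x ∈ X
        · exact Or.inl hx
        · right
          rw [hY]
          intro k
          rw [hX] at hx
          simp only [Set.mem_setOf_eq, not_forall] at hx
          obtain ⟨i, hi⟩ := hx
          have := (hdelta ![p i x, q i x, r k x, s k x]).mpr (fun j => hall ⟨i, k, j⟩)
          simpa [hi] using this
end

section
/- Let A be an essentially at most unary algebra with at least two elements, i.e., the clone of term operations of A is generated by its unary operations. Then the clone of polynomial operations of A is not equationally additive; in particular, Δ_A = {(x1,x2,x3,x4) ∈ A^4 : x1 = x2 or x3 = x4} is not the solution set of any system of equations between quaternary polynomial operations of A. -/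
/-- Polynomial operations over a clone: generated by the clone, the constants
and the projections, closed under composition. -/
inductive PolyOp {A : Type} (C : Clone A) : ∀ n : ℕ, ((Fin n → A) → A) → Prop
  | base {n : ℕ} {f : (Fin n → A) → A} : f ∈ C.ops n → PolyOp C n f
  | const {n : ℕ} (a : A) : PolyOp C n (fun _ => a)
  | proj {n : ℕ} (i : Fin n) : PolyOp C n (fun x => x i)
  | comp {m n : ℕ} {f : (Fin n → A) → A} {g : Fin n → (Fin m → A) → A} :
      PolyOp C n f → (∀ i, PolyOp C m (g i)) → PolyOp C m (fun x => f (fun i => g i x))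

/-- The clone of polynomial operations of the algebra `(A; C)`. -/
def PolClone {A : Type} (C : Clone A) : Clone A where
  ops n := {f | PolyOp C n f}
  proj_mem n i := PolyOp.proj i
  comp_mem _ _ _ _ hf hg := PolyOp.comp hf hg

/-- A congruence of the algebra `(A; C)`: an equivalence relation compatible
with all operations of the clone. -/
def IsCong {A : Type} (C : Clone A) (θ : A → A → Prop) : Prop :=
  Equivalence θ ∧ ∀ (n : ℕ) (f : (Fin n → A) → A), f ∈ C.ops n →
    ∀ x y : Fin n → A, (∀ i, θ (x i) (y i)) → θ (f x) (f y)

/-- `d` is a Mal'cev operation. -/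
def IsMalcev {A : Type} (d : A → A → A → A) : Prop :=
  ∀ a b : A, d a b b = a ∧ d b b a = a

/-- The algebra `(A; C)` has a Mal'cev polynomial. -/
def HasMalcevPoly {A : Type} (C : Clone A) : Prop :=
  ∃ d : A → A → A → A,
    (fun x : Fin 3 → A => d (x 0) (x 1) (x 2)) ∈ (PolClone C).ops 3 ∧ IsMalcev d

/-- `α` centralizes `β` modulo `η` (the term condition). -/
def Centralizes {A : Type} (C : Clone A) (α β η : A → A → Prop) : Prop :=
  ∀ (m k : ℕ) (p : (Fin (m + k) → A) → A), p ∈ (PolClone C).ops (m + k) →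
    ∀ (a b : Fin m → A) (u v : Fin k → A),
      (∀ i, α (a i) (b i)) → (∀ i, β (u i) (v i)) →
      η (p (Fin.append a u)) (p (Fin.append a v)) →
      η (p (Fin.append b u)) (p (Fin.append b v))

/-- The term condition commutator `[α, β]`: the least congruence `η` such that
`α` centralizes `β` modulo `η` (realized as the intersection of all such). -/
def CommRel {A : Type} (C : Clone A) (α β : A → A → Prop) (x y : A) : Prop :=
  ∀ η : A → A → Prop, IsCong C η → Centralizes C α β η → η x y

/-- The congruence of `(A; C)` generated by a binary relation `r`. -/
def CongGen {A : Type} (C : Clone A) (r : A → A → Prop) (x y : A) : Prop :=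
  ∀ θ : A → A → Prop, IsCong C θ → (∀ a b, r a b → θ a b) → θ x y

private lemma eu_poly {A : Type} (C : Clone A)
    (hu : ∀ (n : ℕ) (f : (Fin n → A) → A), f ∈ C.ops n →
      ∃ (i : Fin n) (u : A → A), f = fun x => u (x i)) :
    ∀ {n : ℕ} {f : (Fin n → A) → A}, PolyOp C n f →
      (∃ a, f = fun _ => a) ∨ ∃ (i : Fin n) (u : A → A), f = fun x => u (x i) := by
  intro n f h
  induction h with
  | base hf => exact .inr (hu _ _ hf)
  | const a => exact .inl ⟨a, rfl⟩
  | proj i => exact .inr ⟨i, id, rfl⟩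
  | comp hf hg ihf ihg =>
    rcases ihf with ⟨a, rfl⟩ | ⟨j, u, rfl⟩
    · exact .inl ⟨a, rfl⟩
    · rcases ihg j with ⟨a, hga⟩ | ⟨k, v, hgv⟩
      · exact .inl ⟨u a, by funext x; simp [hga]⟩
      · exact .inr ⟨k, u ∘ v, by funext x; simp [hgv]⟩

private lemma notAlgDelta {A : Type} (C : Clone A) (h2 : ∃ a b : A, a ≠ b)
    (hu : ∀ (n : ℕ) (f : (Fin n → A) → A), f ∈ C.ops n →
      ∃ (i : Fin n) (u : A → A), f = fun x => u (x i)) :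
    ¬ IsAlgSet (PolClone C).ops 4 (Delta A) := by
  rcases h2 with ⟨a, b, hab⟩
  rintro ⟨I, p, q, hp, hq, hX⟩
  set w : Fin 4 → A := ![a,a,a,a] with hw_def
  set e1 : Fin 4 → A := ![a,b,a,a] with he1_def
  set e3 : Fin 4 → A := ![a,a,a,b] with he3_def
  set z : Fin 4 → A := ![a,b,a,b] with hz_def
  have hwmem : w ∈ Delta A := by simp [Delta, hw_def]
  have he1mem : e1 ∈ Delta A := by simp [Delta, he1_def]
  have he3mem : e3 ∈ Delta A := by simp [Delta, he3_def]
  have hznmem : z ∉ Delta A := by simp [Delta, hz_def, hab]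
  rw [hX] at hwmem he1mem he3mem hznmem
  have key : ∀ f : (Fin 4 → A) → A,
      ((∃ c, f = fun _ => c) ∨ ∃ (j : Fin 4) (u : A → A), f = fun x => u (x j)) →
      (f z = f e1 ∧ f e3 = f w) ∨ (f z = f e3 ∧ f e1 = f w) := by
    rintro f (⟨c, rfl⟩ | ⟨j, u, rfl⟩)
    · exact .inl ⟨rfl, rfl⟩
    · fin_cases j <;> simp [hw_def, he1_def, he3_def, hz_def]
  apply hznmem
  intro i
  have hPi := key (p i) (eu_poly C hu (hp i))
  have hQi := key (q i) (eu_poly C hu (hq i))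
  have h1 := he1mem i
  have h3 := he3mem i
  have hw := hwmem i
  rcases hPi with ⟨hz1, hw1⟩ | ⟨hz1, hw1⟩ <;>
    rcases hQi with ⟨hz2, hw2⟩ | ⟨hz2, hw2⟩
  · rw [hz1, hz2, h1]
  · rw [hz1, h1, hw2, ← hw, ← hw1, h3, ← hz2]
  · rw [hz1, h3, hw2, ← hw, ← hw1, h1, ← hz2]
  · rw [hz1, hz2, h3]

/-- If every term operation of an algebra with at least two elements is
essentially at most unary, then the clone of polynomial operations is not
equationally additive; in particular `Δ_A` is not the solution set of a system
of equations between quaternary polynomial operations. -/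
theorem stmt3 {A : Type} (C : Clone A) (h2 : ∃ a b : A, a ≠ b)
    (hu : ∀ (n : ℕ) (f : (Fin n → A) → A), f ∈ C.ops n →
      ∃ (i : Fin n) (u : A → A), f = fun x => u (x i)) :
    ¬ EqAdditive (PolClone C).ops ∧ ¬ IsAlgSet (PolClone C).ops 4 (Delta A) := by
  have hna := notAlgDelta C h2 hu
  refine ⟨fun hadd => hna ?_, hna⟩
  have hX : IsAlgSet (PolClone C).ops 4 {x : Fin 4 → A | x 0 = x 1} :=
    ⟨Unit, fun _ x => x 0, fun _ x => x 1, fun _ => PolyOp.proj 0, fun _ => PolyOp.proj 1,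
      by ext x; exact ⟨fun h _ => h, fun h => h ()⟩⟩
  have hY : IsAlgSet (PolClone C).ops 4 {x : Fin 4 → A | x 2 = x 3} :=
    ⟨Unit, fun _ x => x 2, fun _ x => x 3, fun _ => PolyOp.proj 2, fun _ => PolyOp.proj 3,
      by ext x; exact ⟨fun h _ => h, fun h => h ()⟩⟩
  have := hadd 4 _ _ hX hY
  convert this using 1
  rfl
end

section
/- Let A be a set and C an equationally additive clone on A, so that Δ_A = {x ∈ A^4 : x1 = x2 or x3 = x4} is the solution set of a system of equations p_i = q_i with p_i, q_i quaternary operations in C. Then the algebra (A; C) is finitely subdirectly irreducible: for any two congruences α, β of (A; C) other than the equality relation, the intersection α ∩ β is not the equality relation. -/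
/-- If `C` is an equationally additive clone on `A`, then the algebra `(A; C)`
is finitely subdirectly irreducible: the intersection of two congruences
distinct from the equality relation is distinct from the equality relation. -/
theorem stmt4 {A : Type} (C : Clone A) (hC : EqAdditive C.ops)
    (α β : A → A → Prop) (hα : IsCong C α) (hβ : IsCong C β)
    (hα0 : α ≠ fun a b => a = b) (hβ0 : β ≠ fun a b => a = b) :
    (fun a b => α a b ∧ β a b) ≠ fun a b => a = b := by
  obtain ⟨a, b, hab, hne⟩ : ∃ a b, α a b ∧ a ≠ b := by
    by_contra h
    push_neg at h
    apply hα0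
    funext u v
    exact propext ⟨fun huv => h u v huv, fun huv => huv ▸ hα.1.refl u⟩
  obtain ⟨c, d, hcd, hne'⟩ : ∃ c d, β c d ∧ c ≠ d := by
    by_contra h
    push_neg at h
    apply hβ0
    funext u v
    exact propext ⟨fun huv => h u v huv, fun huv => huv ▸ hβ.1.refl u⟩
  have hΔ : IsAlgSet C.ops 4 (Delta A) := by
    have hX : IsAlgSet C.ops 4 {x | x 0 = x 1} :=
      ⟨Unit, fun _ x => x 0, fun _ x => x 1, fun _ => C.proj_mem 4 0,
        fun _ => C.proj_mem 4 1, by ext x; simp⟩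
    have hY : IsAlgSet C.ops 4 {x | x 2 = x 3} :=
      ⟨Unit, fun _ x => x 2, fun _ x => x 3, fun _ => C.proj_mem 4 2,
        fun _ => C.proj_mem 4 3, by ext x; simp⟩
    have := hC 4 _ _ hX hY
    have heq : Delta A = {x : Fin 4 → A | x 0 = x 1} ∪ {x | x 2 = x 3} := by
      ext x; simp [Delta, Set.mem_union]
    rw [heq]; exact this
  obtain ⟨I, p, q, hp, hq, hEq⟩ := hΔ
  set x : Fin 4 → A := ![a, b, c, d] with hxdef
  have hx : x ∉ Delta A := by
    intro h
    rcases h with h | h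
    · exact hne (by simpa [hxdef] using h)
    · exact hne' (by simpa [hxdef] using h)
  rw [hEq] at hx
  simp only [Set.mem_setOf_eq, not_forall] at hx
  obtain ⟨i, hi⟩ := hx
  set y : Fin 4 → A := ![a, b, c, c] with hydef
  set z : Fin 4 → A := ![a, a, c, d] with hzdef
  have hy : y ∈ Delta A := by simp [Delta, hydef]
  have hz : z ∈ Delta A := by simp [Delta, hzdef]
  rw [hEq] at hy hz
  have hβrel : ∀ j, β (x j) (y j) := by
    intro j
    fin_cases j <;> simp [hxdef, hydef]
    exacts [hβ.1.refl a, hβ.1.refl b, hβ.1.refl c, hβ.1.symm hcd]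
  have hαrel : ∀ j, α (x j) (z j) := by
    intro j
    fin_cases j <;> simp [hxdef, hzdef]
    exacts [hα.1.refl a, hα.1.symm hab, hα.1.refl c, hα.1.refl d]
  have hβi : β (p i x) (q i x) := by
    have h1 : β (p i x) (p i y) := hβ.2 4 (p i) (hp i) x y hβrel
    have h2 : β (q i y) (q i x) := hβ.2 4 (q i) (hq i) y x fun j => hβ.1.symm (hβrel j)
    exact hβ.1.trans (hy i ▸ h1) h2
  have hαi : α (p i x) (q i x) := by
    have h1 : α (p i x) (p i z) := hα.2 4 (p i) (hp i) x z hαrel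
    have h2 : α (q i z) (q i x) := hα.2 4 (q i) (hq i) z x fun j => hα.1.symm (hαrel j)
    exact hα.1.trans (hz i ▸ h1) h2
  intro hcontra
  have := congrFun (congrFun hcontra (p i x)) (q i x)
  exact hi (this ▸ ⟨hαi, hβi⟩)
end

section
/- A clone C on a set X is equationally additive if and only if for every subset B ⊆ X that is invariant under C (i.e., closed under all operations of C), the restricted clone C|_B = {f|_B : f ∈ C} is equationally additive. -/
/-- `B` is invariant under the clone `C`. -/
def Invariant {X : Type} (C : Clone X) (B : Set X) : Prop :=
  ∀ (n : ℕ) (f : (Fin n → X) → X), f ∈ C.ops n →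
    ∀ x : Fin n → X, (∀ i, x i ∈ B) → f x ∈ B

/-- The restriction `C|_B` of a clone `C` to a subset `B`: the operations on `B`
that agree on `B` with some member of `C`. -/
def Clone.restrict {X : Type} (C : Clone X) (B : Set X) : Clone B where
  ops n := {g | ∃ f ∈ C.ops n, ∀ x : Fin n → B, (g x : X) = f fun i => ↑(x i)}
  proj_mem n i := ⟨fun x => x i, C.proj_mem n i, fun _ => rfl⟩
  comp_mem m n f g hf hg := by
    obtain ⟨F, hF, hFe⟩ := hf
    choose G hG hGe using hg
    refine ⟨fun y => F fun i => G i y, C.comp_mem m n F G hF hG, fun x => ?_⟩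
    rw [hFe]
    congr 1
    funext i
    exact hGe i x

/-- A clone `C` on `X` is equationally additive if and only if its restriction
to every invariant subset is equationally additive. -/
theorem stmt11 {X : Type} (C : Clone X) :
    EqAdditive C.ops ↔
      ∀ B : Set X, Invariant C B → EqAdditive (C.restrict B).ops := by
  constructor
  · intro hC B hB n S T hS hT
    obtain ⟨I, p, q, hp, hq, hSeq⟩ := hS
    obtain ⟨J, p', q', hp', hq', hTeq⟩ := hT
    choose P hP hPe using hp
    choose Q hQ hQe using hq
    choose P' hP' hP'e using hp'
    choose Q' hQ' hQ'e using hq'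
    have hU := hC n {x | ∀ i, P i x = Q i x} {x | ∀ j, P' j x = Q' j x}
      ⟨I, P, Q, hP, hQ, rfl⟩ ⟨J, P', Q', hP', hQ', rfl⟩
    obtain ⟨K, r, s, hr, hs, hUeq⟩ := hU
    refine ⟨K, fun k x => ⟨r k fun i => ↑(x i), hB n (r k) (hr k) _ fun i => (x i).2⟩,
      fun k x => ⟨s k fun i => ↑(x i), hB n (s k) (hs k) _ fun i => (x i).2⟩,
      fun k => ⟨r k, hr k, fun _ => rfl⟩, fun k => ⟨s k, hs k, fun _ => rfl⟩, ?_⟩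
    ext x
    have key : x ∈ S ∪ T ↔ (fun i => (x i : X)) ∈
        ({y | ∀ i, P i y = Q i y} ∪ {y | ∀ j, P' j y = Q' j y} : Set (Fin n → X)) := by
      constructor
      · rintro (h | h)
        · rw [hSeq] at h
          exact Or.inl fun i => by rw [← hPe i x, ← hQe i x]; exact congrArg _ (h i)
        · rw [hTeq] at h
          exact Or.inr fun j => by rw [← hP'e j x, ← hQ'e j x]; exact congrArg _ (h j)
      · rintro (h | h)
        · left; rw [hSeq]
          exact fun i => Subtype.ext (by rw [hPe i x, hQe i x]; exact h i)
        · right; rw [hTeq]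
          exact fun j => Subtype.ext (by rw [hP'e j x, hQ'e j x]; exact h j)
    rw [key, hUeq]
    simp only [Set.mem_setOf_eq, Subtype.ext_iff]
  · intro h n S T hS hT
    have hU := h Set.univ (fun _ _ _ _ _ => trivial)
    obtain ⟨I, p, q, hp, hq, hSeq⟩ := hS
    obtain ⟨J, p', q', hp', hq', hTeq⟩ := hT
    -- lift to Set.univ
    let lift : ((Fin n → X) → X) → ((Fin n → (Set.univ : Set X)) → (Set.univ : Set X)) :=
      fun f y => ⟨f fun i => ↑(y i), trivial⟩
    have hlift : ∀ f ∈ C.ops n, lift f ∈ (C.restrict Set.univ).ops n :=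
      fun f hf => ⟨f, hf, fun _ => rfl⟩
    have hUalg := hU n {y | ∀ i, lift (p i) y = lift (q i) y}
      {y | ∀ j, lift (p' j) y = lift (q' j) y}
      ⟨I, fun i => lift (p i), fun i => lift (q i),
        fun i => hlift _ (hp i), fun i => hlift _ (hq i), rfl⟩
      ⟨J, fun j => lift (p' j), fun j => lift (q' j),
        fun j => hlift _ (hp' j), fun j => hlift _ (hq' j), rfl⟩
    obtain ⟨K, r, s, hr, hs, hUeq⟩ := hUalg
    choose R hR hRe using hr
    choose Sf hSf hSfe using hs
    refine ⟨K, R, Sf, hR, hSf, ?_⟩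
    ext x
    have key : x ∈ S ∪ T ↔ (fun i => (⟨x i, trivial⟩ : (Set.univ : Set X))) ∈
        ({y | ∀ i, lift (p i) y = lift (q i) y} ∪
          {y | ∀ j, lift (p' j) y = lift (q' j) y} : Set (Fin n → (Set.univ : Set X))) := by
      simp only [Set.mem_union, Set.mem_setOf_eq, Subtype.ext_iff]
      rw [hSeq, hTeq]
      rfl
    rw [key, hUeq]
    simp only [Set.mem_setOf_eq, Subtype.ext_iff]
    constructor
    · intro hk k
      have := hk k
      rwa [hRe k, hSfe k] at this
    · intro hk k
      rw [hRe k, hSfe k]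
      exact hk k
end

section
/- Let A be an algebra with a Mal'cev polynomial, let k ∈ ℕ and a1,...,ak, b1,...,bk ∈ A. Then the congruence generated by {(a1,b1),...,(ak,bk)} equals {(p(a1,...,ak), p(b1,...,bk)) : p a k-ary polynomial operation of A}. -/
lemma poly_cong {A : Type} {C : Clone A} {θ : A → A → Prop} (hθ : IsCong C θ) :
    ∀ {n : ℕ} {p : (Fin n → A) → A}, PolyOp C n p →
      ∀ a b : Fin n → A, (∀ i, θ (a i) (b i)) → θ (p a) (p b) := by
  intro n p hp
  induction hp with
  | @base n f hf => intro a b hab; exact hθ.2 n f hf a b hab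
  | const c => intro a b _; exact hθ.1.refl c
  | proj i => intro a b hab; exact hab i
  | @comp m n f g hf hg ihf ihg =>
      intro a b hab
      exact ihf _ _ (fun i => ihg i a b hab)

lemma d_poly {A : Type} {C : Clone A} {d : A → A → A → A}
    (hd : PolyOp C 3 (fun x : Fin 3 → A => d (x 0) (x 1) (x 2)))
    {k : ℕ} {p q r : (Fin k → A) → A}
    (hp : PolyOp C k p) (hq : PolyOp C k q) (hr : PolyOp C k r) :
    PolyOp C k (fun z => d (p z) (q z) (r z)) := by
  have hg : ∀ i : Fin 3, PolyOp C k (![p, q, r] i) := by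
    intro i
    fin_cases i
    · exact hp
    · exact hq
    · exact hr
  have h := PolyOp.comp hd hg
  have e : (fun z => (fun x : Fin 3 → A => d (x 0) (x 1) (x 2)) (fun i => ![p, q, r] i z))
      = fun z => d (p z) (q z) (r z) := by
    funext z; simp
  rwa [e] at h

/-- In an algebra with a Mal'cev polynomial, the congruence generated by the
pairs `(a i, b i)` consists exactly of the pairs `(p(a), p(b))` for `k`-ary
polynomial operations `p`. -/
theorem stmt13 {A : Type} (C : Clone A) (hM : HasMalcevPoly C) (k : ℕ)
    (a b : Fin k → A) (x y : A) :
    CongGen C (fun u v => ∃ i : Fin k, u = a i ∧ v = b i) x y ↔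
      ∃ p : (Fin k → A) → A, p ∈ (PolClone C).ops k ∧ x = p a ∧ y = p b := by
  obtain ⟨d, hd, hMd⟩ := hM
  constructor
  · intro h
    apply h
    · constructor
      · refine ⟨?_, ?_, ?_⟩
        · intro z; exact ⟨fun _ => z, PolyOp.const z, rfl, rfl⟩
        · rintro u v ⟨p, hp, hu, hv⟩
          refine ⟨fun z => d (p a) (p z) (p b),
            d_poly hd (PolyOp.const _) hp (PolyOp.const _), ?_, ?_⟩
          · show v = d (p a) (p a) (p b)
            rw [(hMd (p b) (p a)).2]; exact hv
          · show u = d (p a) (p b) (p b)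
            rw [(hMd (p a) (p b)).1]; exact hu
        · rintro u v w ⟨p, hp, hu, hv⟩ ⟨q, hq, hv', hw⟩
          refine ⟨fun z => d (p z) (p b) (q z),
            d_poly hd hp (PolyOp.const _) hq, ?_, ?_⟩
          · show u = d (p a) (p b) (q a)
            rw [← hv', hv, (hMd (p a) (p b)).1]; exact hu
          · show w = d (p b) (p b) (q b)
            rw [(hMd (q b) (p b)).2]; exact hw
      · intro n f hf u v huv
        choose p hp hu hv using huv
        refine ⟨fun z => f (fun i => p i z), PolyOp.comp (.base hf) hp, ?_, ?_⟩
        · exact congrArg f (funext hu)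
        · exact congrArg f (funext hv)
    · rintro u v ⟨i, rfl, rfl⟩
      exact ⟨fun z => z i, PolyOp.proj i, rfl, rfl⟩
  · rintro ⟨p, hp, rfl, rfl⟩ θ hθ hr
    exact poly_cong hθ hp a b (fun i => hr _ _ ⟨i, rfl, rfl⟩)
end

section
/- Let A be a finite set with at least two elements, 0 ∈ A, and f: A^4 → A a function such that Δ_A = {x ∈ A^4 : f(x) = 0}, where Δ_A = {(x1,x2,x3,x4) : x1 = x2 or x3 = x4}. Then, in the algebra (A; f), there exists a unary polynomial operation p and an element i ∈ f(A^4) with i ≠ 0 such that p(0) = 0 and p(x) = i for every x ∈ A \ {0}. -/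
/-- Polynomial operations of the algebra `(A; f)` with a single quaternary basic
operation `f`: generated by projections, constants and `f`. -/
inductive PolyF {A : Type} (f : (Fin 4 → A) → A) : ∀ n : ℕ, ((Fin n → A) → A) → Prop
  | proj {n : ℕ} (i : Fin n) : PolyF f n (fun x => x i)
  | const {n : ℕ} (a : A) : PolyF f n (fun _ => a)
  | app {n : ℕ} {g : Fin 4 → (Fin n → A) → A} :
      (∀ i, PolyF f n (g i)) → PolyF f n (fun x => f fun i => g i x)

lemma poly_app4 {A : Type} {f : (Fin 4 → A) → A} {n : ℕ}
    {p q r s : (Fin n → A) → A}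
    (hp : PolyF f n p) (hq : PolyF f n q) (hr : PolyF f n r) (hs : PolyF f n s) :
    PolyF f n (fun x => f ![p x, q x, r x, s x]) := by
  have h : (fun x => f ![p x, q x, r x, s x])
      = fun x => f (fun i => (![p, q, r, s] : Fin 4 → (Fin n → A) → A) i x) := by
    funext x; congr 1; funext i; fin_cases i <;> rfl
  rw [h]
  exact PolyF.app (fun i => by fin_cases i <;> assumption)

/-- If `A` is finite with at least two elements and `f : A^4 → A` defines `Δ_A`
as its `z`-fiber, then `(A; f)` has a unary polynomial `p` and a value
`i ∈ f[A^4] \ {z}` with `p z = z` and `p x = i` for all `x ≠ z`. -/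
theorem stmt14 {A : Type} [Finite A] (h2 : ∃ a b : A, a ≠ b) (z : A)
    (f : (Fin 4 → A) → A)
    (hf : {x : Fin 4 → A | x 0 = x 1 ∨ x 2 = x 3} = {x | f x = z}) :
    ∃ p : A → A, PolyF f 1 (fun x => p (x 0)) ∧
      ∃ i : A, (∃ v : Fin 4 → A, f v = i) ∧ i ≠ z ∧
        p z = z ∧ ∀ x : A, x ≠ z → p x = i := by
  classical
  have := Fintype.ofFinite A
  obtain ⟨a, b, hab⟩ := h2
  have key : ∀ v : Fin 4 → A, f v = z ↔ (v 0 = v 1 ∨ v 2 = v 3) := by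
    intro v
    exact (Set.ext_iff.mp hf v).symm
  -- a nonzero element
  set w : A := if a = z then b else a with hwdef
  have hw : w ≠ z := by
    rw [hwdef]; split
    · rename_i h; intro hb; exact hab (h.trans hb.symm)
    · assumption
  -- list of all elements ≠ z
  set L : List A := (Finset.univ.filter (· ≠ z)).toList with hLdef
  have hL : ∀ c : A, c ∈ L ↔ c ≠ z := by
    intro c
    simp [hLdef]
  -- the "or of indicators" function
  set r : A → A :=
    fun x => L.foldr (fun c acc => f ![f ![x, c, a, b], z, acc, z]) w with hrdef
  -- spec of the fold for arbitrary lists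
  have fold_spec : ∀ (M : List A) (x : A),
      (M.foldr (fun c acc => f ![f ![x, c, a, b], z, acc, z]) w = z) ↔
        ∃ c ∈ M, x = c := by
    intro M x
    induction M with
    | nil => simpa using hw
    | cons c M ih =>
        simp only [List.foldr_cons]
        rw [key]
        constructor
        · rintro (h | h)
          · simp only [Matrix.cons_val_zero, Matrix.cons_val_one, Matrix.head_cons] at h
            rcases (key _).mp h with h' | h'
            · simp only [Matrix.cons_val_zero, Matrix.cons_val_one, Matrix.head_cons] at h'
              exact ⟨c, by simp, h'⟩
            · simp only [Matrix.cons_val_fin_one, Matrix.cons_val_two, Matrix.cons_val_three,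
                Matrix.tail_cons, Matrix.head_cons] at h'
              exact absurd h' hab
          · simp only [Matrix.cons_val_two, Matrix.tail_cons, Matrix.head_cons,
              Matrix.cons_val_three] at h
            obtain ⟨d, hd, hxd⟩ := ih.mp h
            exact ⟨d, by simp [hd], hxd⟩
        · rintro ⟨d, hd, hxd⟩
          rcases List.mem_cons.mp hd with h | h
          · left
            show f ![x, c, a, b] = z
            rw [key]
            left
            simpa [h] using hxd
          · right
            show (M.foldr (fun c acc => f ![f ![x, c, a, b], z, acc, z]) w) = z
            exact (ih).mpr ⟨d, h, hxd⟩
  have hrz : r z ≠ z := by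
    rw [hrdef]
    intro h
    obtain ⟨c, hc, hzc⟩ := (fold_spec L z).mp h
    exact (hL c).mp hc hzc.symm
  have hrx : ∀ x : A, x ≠ z → r x = z := by
    intro x hx
    exact (fold_spec L x).mpr ⟨x, (hL x).mpr hx, rfl⟩
  -- the unary polynomial
  refine ⟨fun x => f ![r x, r z, a, b], ?_, f ![z, r z, a, b], ⟨_, rfl⟩, ?_, ?_, ?_⟩
  · -- PolyF
    have hrpoly : PolyF f 1 (fun x : Fin 1 → A => r (x 0)) := by
      rw [hrdef]
      induction L with
      | nil => exact PolyF.const w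
      | cons c M ih =>
          simp only [List.foldr_cons]
          exact poly_app4 (poly_app4 (PolyF.proj 0) (PolyF.const c) (PolyF.const a)
            (PolyF.const b)) (PolyF.const z) ih (PolyF.const z)
    exact poly_app4 hrpoly (PolyF.const (r z)) (PolyF.const a) (PolyF.const b)
  · -- i ≠ z
    intro h
    rcases (key _).mp h with h' | h'
    · simp only [Matrix.cons_val_zero, Matrix.cons_val_one, Matrix.head_cons] at h'
      exact hrz h'.symm
    · simp only [Matrix.cons_val_two, Matrix.tail_cons, Matrix.head_cons,
        Matrix.cons_val_three] at h'
      exact hab h'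
  · -- p z = z
    rw [key]
    left
    rfl
  · -- p x = i for x ≠ z
    intro x hx
    show f ![r x, r z, a, b] = _
    rw [hrx x hx]
end

section
/- Let A be an algebra with a weak difference polynomial d. If the clone of polynomial operations of A is equationally additive (equivalently, Δ_A = {x ∈ A^4 : x1 = x2 or x3 = x4} is the solution set of a system of equations between quaternary polynomial operations), then for every congruence α of A strictly above the equality relation, the commutator [α, α] is strictly above the equality relation. -/
section Helpers

variable {A : Type} {C : Clone A}

lemma polyop_ext {n : ℕ} {f g : (Fin n → A) → A} (h : ∀ x, f x = g x)
    (hf : PolyOp C n f) : PolyOp C n g := by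
  have hfg : f = g := funext h
  exact hfg ▸ hf

lemma poly_pres {θ : A → A → Prop} (hθ : IsCong C θ) {n : ℕ} {f : (Fin n → A) → A}
    (hf : PolyOp C n f) : ∀ x y : Fin n → A, (∀ i, θ (x i) (y i)) → θ (f x) (f y) := by
  induction hf with
  | base h => exact fun x y hxy => hθ.2 _ _ h x y hxy
  | const a => exact fun _ _ _ => hθ.1.refl a
  | proj i => exact fun x y hxy => hxy i
  | comp hf hg ihf ihg => exact fun x y hxy => ihf _ _ (fun i => ihg i x y hxy)

lemma comm_cong {α β : A → A → Prop} : IsCong C (CommRel C α β) := by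
  refine ⟨⟨?_, ?_, ?_⟩, ?_⟩
  · exact fun x η hη _ => hη.1.refl x
  · exact fun h η hη hc => hη.1.symm (h η hη hc)
  · exact fun h1 h2 η hη hc => hη.1.trans (h1 η hη hc) (h2 η hη hc)
  · exact fun n f hf x y hxy η hη hc => hη.2 n f hf x y (fun i => hxy i η hη hc)

lemma comm_cent {α β : A → A → Prop} : Centralizes C α β (CommRel C α β) :=
  fun m k p hp a b u v ha hu hpre η hη hc =>
    hc m k p hp a b u v ha hu (hpre η hη hc)

end Helpers

/-- If an algebra has a weak difference polynomial `d` and its clone of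
polynomial operations is equationally additive, then every congruence strictly
above the equality relation has commutator `[α, α]` strictly above equality. -/
theorem stmt15 {A : Type} (C : Clone A) (d : A → A → A → A)
    (hd : (fun x : Fin 3 → A => d (x 0) (x 1) (x 2)) ∈ (PolClone C).ops 3)
    (hwd : ∀ θ : A → A → Prop, IsCong C θ → ∀ a b : A, θ a b →
      CommRel C θ θ (d a b b) a ∧ CommRel C θ θ a (d b b a))
    (hadd : EqAdditive (PolClone C).ops) :
    ∀ α : A → A → Prop, IsCong C α → (∃ a b : A, a ≠ b ∧ α a b) →
      ∃ a b : A, a ≠ b ∧ CommRel C α α a b := by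
  rintro α hα ⟨a, b, hne, hab⟩
  by_contra hcon
  push_neg at hcon
  have hsub : ∀ x y : A, CommRel C α α x y → x = y := by
    intro x y h
    by_contra hne'
    exact hcon x y hne' h
  have hM1 : ∀ x y : A, α x y → d x y y = x := fun x y h => hsub _ _ (hwd α hα x y h).1
  have hM2 : ∀ x y : A, α x y → d y y x = x := fun x y h => (hsub _ _ (hwd α hα x y h).2).symm
  have haa : α a a := hα.1.refl a
  have hba : α b a := hα.1.symm hab
  -- the term condition modulo the equality relation, for binary polynomials
  have happ : ∀ x y : A, Fin.append (fun _ : Fin 1 => x) (fun _ : Fin 1 => y) = ![x, y] := by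
    intro x y; funext i; fin_cases i <;> rfl
  have hTC : ∀ (G : (Fin (1+1) → A) → A), PolyOp C (1+1) G →
      ∀ x x' y y' : A, α x x' → α y y' →
      G ![x, y] = G ![x, y'] → G ![x', y] = G ![x', y'] := by
    intro G hG x x' y y' hx hy hpre
    have h := comm_cent (C := C) (α := α) (β := α) 1 1 G hG
      (fun _ => x) (fun _ => x') (fun _ => y) (fun _ => y')
      (fun _ => hx) (fun _ => hy)
    rw [happ, happ, happ, happ] at h
    refine hsub _ _ (h ?_)
    rw [hpre]
    exact (comm_cong (C := C) (α := α) (β := α)).1.refl _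
  -- building binary polynomials
  have hcompd : ∀ (e1 e2 e3 : (Fin (1+1) → A) → A), PolyOp C (1+1) e1 → PolyOp C (1+1) e2 →
      PolyOp C (1+1) e3 → PolyOp C (1+1) (fun z => d (e1 z) (e2 z) (e3 z)) := by
    intro e1 e2 e3 h1 h2 h3
    have h := PolyOp.comp (m := 1+1) (n := 3)
      (f := fun x : Fin 3 → A => d (x 0) (x 1) (x 2)) (g := ![e1, e2, e3]) hd
      (by intro i; fin_cases i <;> assumption)
    exact polyop_ext (fun z => rfl) h
  have hcomp4 : ∀ (r : (Fin 4 → A) → A), PolyOp C 4 r →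
      PolyOp C (1+1) (fun z : Fin (1+1) → A => r ![a, z 0, a, z 1]) := by
    intro r hr
    have h := PolyOp.comp (m := 1+1) (n := 4) (f := r)
      (g := ![fun _ => a, fun z => z 0, fun _ => a, fun z => z 1]) hr
      (by
        intro i
        fin_cases i
        · exact PolyOp.const a
        · exact PolyOp.proj 0
        · exact PolyOp.const a
        · exact PolyOp.proj 1)
    refine polyop_ext (fun z => ?_) h
    exact congrArg r (funext fun j => by fin_cases j <;> rfl)
  have hcomp4' : ∀ (r : (Fin 4 → A) → A), PolyOp C 4 r →
      PolyOp C (1+1) (fun z : Fin (1+1) → A => r ![a, z 0, a, a]) := by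
    intro r hr
    have h := PolyOp.comp (m := 1+1) (n := 4) (f := r)
      (g := ![fun _ => a, fun z => z 0, fun _ => a, fun _ => a]) hr
      (by
        intro i
        fin_cases i
        · exact PolyOp.const a
        · exact PolyOp.proj 0
        · exact PolyOp.const a
        · exact PolyOp.const a)
    refine polyop_ext (fun z => ?_) h
    exact congrArg r (funext fun j => by fin_cases j <;> rfl)
  -- α-relations between values of quaternary polynomials
  have hpres : ∀ (r : (Fin 4 → A) → A), PolyOp C 4 r → ∀ y w y' w' : A,
      α y y' → α w w' → α (r ![a, y, a, w]) (r ![a, y', a, w']) := by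
    intro r hr y w y' w' h1 h2
    refine poly_pres hα hr _ _ ?_
    intro j
    fin_cases j
    · exact haa
    · exact h1
    · exact haa
    · exact h2
  -- Delta is an algebraic set
  have hX : IsAlgSet (PolClone C).ops 4 {x : Fin 4 → A | x 0 = x 1} :=
    ⟨Unit, fun _ => (fun x => x 0), fun _ => (fun x => x 1),
      fun _ => PolyOp.proj 0, fun _ => PolyOp.proj 1,
      Set.ext fun x => ⟨fun h _ => h, fun h => h ()⟩⟩
  have hY : IsAlgSet (PolClone C).ops 4 {x : Fin 4 → A | x 2 = x 3} :=
    ⟨Unit, fun _ => (fun x => x 2), fun _ => (fun x => x 3),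
      fun _ => PolyOp.proj 2, fun _ => PolyOp.proj 3,
      Set.ext fun x => ⟨fun h _ => h, fun h => h ()⟩⟩
  have hU := hadd 4 _ _ hX hY
  have hDU : ({x : Fin 4 → A | x 0 = x 1} ∪ {x | x 2 = x 3}) = Delta A := rfl
  rw [hDU] at hU
  obtain ⟨I, p, q, hp, hq, hDeq⟩ := hU
  have hmem : ∀ (x : Fin 4 → A), (x 0 = x 1 ∨ x 2 = x 3) → ∀ i, p i x = q i x := by
    intro x hx i
    have hxD : x ∈ Delta A := hx
    rw [hDeq] at hxD
    exact hxD i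
  -- the main computation, for each equation index i
  have hkey : ∀ i, p i ![a, b, a, b] = q i ![a, b, a, b] := by
    intro i
    have hPQ1 : ∀ w, p i ![a, a, a, w] = q i ![a, a, a, w] := fun w =>
      hmem ![a, a, a, w] (Or.inl rfl) i
    have hPQ2 : ∀ y, p i ![a, y, a, a] = q i ![a, y, a, a] := fun y =>
      hmem ![a, y, a, a] (Or.inr rfl) i
    -- Step 1 : d (p i ![a,b,a,b]) (q i ![a,b,a,b]) (q i ![a,b,a,a]) = q i ![a,b,a,a]
    have hG : PolyOp C (1+1) (fun z : Fin (1+1) → A =>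
        d (p i ![a, z 0, a, z 1]) (q i ![a, z 0, a, z 1]) (q i ![a, z 0, a, a])) :=
      hcompd _ _ _ (hcomp4 (p i) (hp i)) (hcomp4 (q i) (hq i)) (hcomp4' (q i) (hq i))
    have hstep1 := hTC _ hG a b a b hab hab (by
      show d (p i ![a, a, a, a]) (q i ![a, a, a, a]) (q i ![a, a, a, a])
        = d (p i ![a, a, a, b]) (q i ![a, a, a, b]) (q i ![a, a, a, a])
      rw [hPQ1 a, hPQ1 b]
      rw [hM2 (q i ![a, a, a, a]) (q i ![a, a, a, a]) (hα.1.refl _)]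
      rw [hM2 (q i ![a, a, a, a]) (q i ![a, a, a, b])
        (hpres (q i) (hq i) a a a b haa hab)])
    have hstep1' : d (p i ![a, b, a, b]) (q i ![a, b, a, b]) (q i ![a, b, a, a])
        = q i ![a, b, a, a] := by
      have h2 : (fun z : Fin (1+1) → A =>
          d (p i ![a, z 0, a, z 1]) (q i ![a, z 0, a, z 1]) (q i ![a, z 0, a, a])) ![b, a]
          = q i ![a, b, a, a] := by
        show d (p i ![a, b, a, a]) (q i ![a, b, a, a]) (q i ![a, b, a, a]) = q i ![a, b, a, a]
        rw [hPQ2 b]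
        exact hM1 _ _ (hα.1.refl _)
      calc d (p i ![a, b, a, b]) (q i ![a, b, a, b]) (q i ![a, b, a, a])
          = _ := (hstep1).symm
        _ = q i ![a, b, a, a] := h2
    -- Step 2 : cancellation
    have hQbbQba : α (q i ![a, b, a, b]) (q i ![a, b, a, a]) :=
      hpres (q i) (hq i) b b b a (hα.1.refl b) hba
    have hPbbQbb : α (p i ![a, b, a, b]) (q i ![a, b, a, b]) := by
      have h1 : α (p i ![a, b, a, b]) (p i ![a, a, a, a]) :=
        hpres (p i) (hp i) b b a a hba hba
      have h2 : α (q i ![a, a, a, a]) (q i ![a, b, a, b]) :=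
        hpres (q i) (hq i) a a b b hab hab
      rw [hPQ1 a] at h1
      exact hα.1.trans h1 h2
    have hstep2 : d (q i ![a, b, a, b]) (q i ![a, b, a, b]) (q i ![a, b, a, a])
        = q i ![a, b, a, a] := hM2 _ _ (hα.1.symm hQbbQba)
    have hG2 : PolyOp C (1+1) (fun z : Fin (1+1) → A =>
        d (z 1) (z 0) (q i ![a, b, a, a])) :=
      hcompd _ _ _ (PolyOp.proj 1) (PolyOp.proj 0) (PolyOp.const _)
    have hcanc := hTC _ hG2 (q i ![a, b, a, b]) (q i ![a, b, a, a])
      (p i ![a, b, a, b]) (q i ![a, b, a, b]) hQbbQba hPbbQbb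
      (by
        show d (p i ![a, b, a, b]) (q i ![a, b, a, b]) (q i ![a, b, a, a])
          = d (q i ![a, b, a, b]) (q i ![a, b, a, b]) (q i ![a, b, a, a])
        rw [hstep1', hstep2])
    have hcanc' : d (p i ![a, b, a, b]) (q i ![a, b, a, a]) (q i ![a, b, a, a])
        = d (q i ![a, b, a, b]) (q i ![a, b, a, a]) (q i ![a, b, a, a]) := hcanc
    rw [hM1 _ _ (hα.1.trans hPbbQbb hQbbQba), hM1 _ _ hQbbQba] at hcanc'
    exact hcanc'
  -- conclude
  have hmemD : (![a, b, a, b] : Fin 4 → A) ∈ Delta A := by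
    rw [hDeq]
    exact hkey
  rcases hmemD with h | h
  · exact hne h
  · exact hne h
end

section
/- Let A be an algebra with a Mal'cev polynomial d such that for all congruences α, β of A strictly above the equality relation, the commutator [α, β] is strictly above the equality relation. Then the clone of polynomial operations of A is equationally additive: for every n and all sets B, C ⊆ A^n algebraic with respect to the polynomial clone, B ∪ C is algebraic with respect to the polynomial clone. -/
section Aux

variable {A : Type} {C : Clone A}

lemma polyCongr {n : ℕ} {f g : (Fin n → A) → A} (h : PolyOp C n f) (e : ∀ x, f x = g x) :
    PolyOp C n g := (funext e) ▸ h

/-- A unary polynomial, as a function `A → A`. -/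
def IsP1 (C : Clone A) (p : A → A) : Prop := PolyOp C 1 (fun v => p (v 0))

lemma polyOfP1 {p : A → A} (hp : IsP1 C p) {n : ℕ} (i : Fin n) :
    PolyOp C n (fun x => p (x i)) :=
  PolyOp.comp hp (fun _ => PolyOp.proj i)

lemma polyComp3 {d : A → A → A → A} (hd : PolyOp C 3 (fun v => d (v 0) (v 1) (v 2)))
    {n : ℕ} {f1 f2 f3 : (Fin n → A) → A}
    (h1 : PolyOp C n f1) (h2 : PolyOp C n f2) (h3 : PolyOp C n f3) :
    PolyOp C n (fun x => d (f1 x) (f2 x) (f3 x)) := by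
  have h := PolyOp.comp (g := ![f1, f2, f3]) hd (by
    intro i; fin_cases i
    · exact h1
    · exact h2
    · exact h3)
  refine polyCongr h fun x => ?_
  simp [Matrix.cons_val_zero, Matrix.cons_val_one, Matrix.head_cons]

lemma polyComp4 {F : (Fin 4 → A) → A} (hF : PolyOp C 4 F)
    {n : ℕ} {f1 f2 f3 f4 : (Fin n → A) → A}
    (h1 : PolyOp C n f1) (h2 : PolyOp C n f2) (h3 : PolyOp C n f3) (h4 : PolyOp C n f4) :
    PolyOp C n (fun x => F ![f1 x, f2 x, f3 x, f4 x]) := by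
  have h := PolyOp.comp (g := ![f1, f2, f3, f4]) hF (by
    intro i; fin_cases i
    · exact h1
    · exact h2
    · exact h3
    · exact h4)
  refine polyCongr h fun x => ?_
  congr 1
  funext i; fin_cases i <;> rfl

lemma polyAppend {m k : ℕ} {p : (Fin (m + k) → A) → A} (hp : PolyOp C (m + k) p)
    (P : Fin m → A → A) (Q : Fin k → A → A)
    (hP : ∀ i, IsP1 C (P i)) (hQ : ∀ j, IsP1 C (Q j))
    {n : ℕ} (i1 i2 : Fin n) :
    PolyOp C n (fun w => p (Fin.append (fun i => P i (w i1)) (fun j => Q j (w i2)))) := by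
  have h := PolyOp.comp
    (g := Fin.append (fun i (w : Fin n → A) => P i (w i1)) (fun j (w : Fin n → A) => Q j (w i2)))
    hp (by
      intro l
      refine Fin.addCases (fun i => ?_) (fun j => ?_) l
      · rw [Fin.append_left]; exact polyOfP1 (hP i) i1
      · rw [Fin.append_right]; exact polyOfP1 (hQ j) i2)
  refine polyCongr h fun w => ?_
  congr 1
  funext l
  refine Fin.addCases (fun i => ?_) (fun j => ?_) l
  · simp [Fin.append_left]
  · simp [Fin.append_right]

lemma isCong_congGen (r : A → A → Prop) : IsCong C (CongGen C r) := by
  refine ⟨⟨fun x θ hθ _ => hθ.1.refl x,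
          fun h θ hθ hr => hθ.1.symm (h θ hθ hr),
          fun h h' θ hθ hr => hθ.1.trans (h θ hθ hr) (h' θ hθ hr)⟩, ?_⟩
  intro n f hf x y hxy θ hθ hr
  exact hθ.2 n f hf x y (fun i => hxy i θ hθ hr)

lemma isCong_eq : IsCong C (fun a b : A => a = b) := by
  refine ⟨⟨fun _ => rfl, fun h => h.symm, fun h h' => h.trans h'⟩, ?_⟩
  intro n f _ x y hxy
  have : x = y := funext hxy
  rw [this]

/-- Principal congruences in a Mal'cev algebra: every pair in the congruence
generated by `(x, y)` is of the form `(p x, p y)` for a unary polynomial `p`. -/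
lemma congGen_pair {d : A → A → A → A} (hd : PolyOp C 3 (fun v => d (v 0) (v 1) (v 2)))
    (hMd : IsMalcev d) (x y : A) {c e : A}
    (h : CongGen C (fun a b => a = x ∧ b = y) c e) :
    ∃ p : A → A, IsP1 C p ∧ c = p x ∧ e = p y := by
  refine h (fun c e => ∃ p : A → A, IsP1 C p ∧ c = p x ∧ e = p y) ⟨⟨?_, ?_, ?_⟩, ?_⟩ ?_
  · intro c
    exact ⟨fun _ => c, PolyOp.const c, rfl, rfl⟩
  · rintro c e ⟨p, hp, hc, he⟩
    refine ⟨fun t => d (p x) (p t) (p y), polyComp3 hd (PolyOp.const _) hp (PolyOp.const _), ?_, ?_⟩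
    · show e = d (p x) (p x) (p y)
      rw [(hMd (p y) (p x)).2]; exact he
    · show c = d (p x) (p y) (p y)
      rw [(hMd (p x) (p y)).1]; exact hc
  · rintro c e g ⟨p, hp, hc, he⟩ ⟨q, hq, he', hg⟩
    refine ⟨fun t => d (p t) (p y) (q t), polyComp3 hd hp (PolyOp.const _) hq, ?_, ?_⟩
    · show c = d (p x) (p y) (q x)
      rw [← hc, ← he, ← he', (hMd c e).1]
    · show g = d (p y) (p y) (q y)
      rw [(hMd (q y) (p y)).2]; exact hg
  · intro n f hf xs ys hxy
    choose P h1 h2 h3 using hxy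
    refine ⟨fun t => f (fun i => P i t),
      PolyOp.comp (PolyOp.base hf) (fun i => polyOfP1 (h1 i) 0), ?_, ?_⟩
    · congr 1; funext i; exact h2 i
    · congr 1; funext i; exact h3 i
  · rintro a b ⟨ha, hb⟩
    subst ha; subst hb
    exact ⟨id, PolyOp.proj 0, rfl, rfl⟩

/-- The key step: if no pair of quaternary polynomials separates `z` from `Δ`,
then the principal congruences generated by `(z 0, z 1)` and `(z 2, z 3)`
centralize each other modulo equality. -/
lemma key_centralizes {d : A → A → A → A} (hd : PolyOp C 3 (fun v => d (v 0) (v 1) (v 2)))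
    (hMd : IsMalcev d) (z : Fin 4 → A)
    (H : ∀ F G : (Fin 4 → A) → A, PolyOp C 4 F → PolyOp C 4 G →
      (∀ w ∈ Delta A, F w = G w) → F z = G z) :
    Centralizes C (CongGen C (fun a b => a = z 0 ∧ b = z 1))
      (CongGen C (fun a b => a = z 2 ∧ b = z 3)) (fun a b => a = b) := by
  intro m k p hp a b u v hab huv heq
  choose P hP haP hbP using fun i => congGen_pair hd hMd (z 0) (z 1) (hab i)
  choose Q hQ huQ hvQ using fun j => congGen_pair hd hMd (z 2) (z 3) (huv j)
  have hF1 : PolyOp C 4 (fun w =>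
      d (p (Fin.append (fun i => P i (w 1)) (fun j => Q j (w 2))))
        (p (Fin.append (fun i => P i (w 0)) (fun j => Q j (w 2))))
        (p (Fin.append (fun i => P i (w 0)) (fun j => Q j (w 3))))) :=
    polyComp3 hd (polyAppend hp P Q hP hQ 1 2) (polyAppend hp P Q hP hQ 0 2)
      (polyAppend hp P Q hP hQ 0 3)
  have hF2 : PolyOp C 4 (fun w => p (Fin.append (fun i => P i (w 1)) (fun j => Q j (w 3)))) :=
    polyAppend hp P Q hP hQ 1 3
  have hagree : ∀ w ∈ Delta A,
      (fun w =>
        d (p (Fin.append (fun i => P i (w 1)) (fun j => Q j (w 2))))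
          (p (Fin.append (fun i => P i (w 0)) (fun j => Q j (w 2))))
          (p (Fin.append (fun i => P i (w 0)) (fun j => Q j (w 3))))) w =
      (fun w => p (Fin.append (fun i => P i (w 1)) (fun j => Q j (w 3)))) w := by
    intro w hw
    show d (p (Fin.append (fun i => P i (w 1)) (fun j => Q j (w 2))))
          (p (Fin.append (fun i => P i (w 0)) (fun j => Q j (w 2))))
          (p (Fin.append (fun i => P i (w 0)) (fun j => Q j (w 3)))) =
        p (Fin.append (fun i => P i (w 1)) (fun j => Q j (w 3)))
    rcases hw with h01 | h23
    · rw [h01]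
      exact (hMd _ _).2
    · rw [h23]
      exact (hMd _ _).1
  have hz := H _ _ hF1 hF2 hagree
  have ea : (fun i => P i (z 0)) = a := funext fun i => (haP i).symm
  have eb : (fun i => P i (z 1)) = b := funext fun i => (hbP i).symm
  have eu : (fun j => Q j (z 2)) = u := funext fun j => (huQ j).symm
  have ev : (fun j => Q j (z 3)) = v := funext fun j => (hvQ j).symm
  simp only [ea, eb, eu, ev] at hz
  show p (Fin.append b u) = p (Fin.append b v)
  rw [heq] at hz
  rw [(hMd (p (Fin.append b u)) (p (Fin.append a v))).1] at hz
  exact hz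

/-- The relation `Δ_A` is algebraic w.r.t. the polynomial clone. -/
lemma delta_alg (hM : HasMalcevPoly C)
    (hcomm : ∀ α β : A → A → Prop, IsCong C α → IsCong C β →
      (∃ a b : A, a ≠ b ∧ α a b) → (∃ a b : A, a ≠ b ∧ β a b) →
      ∃ a b : A, a ≠ b ∧ CommRel C α β a b) :
    ∃ (I : Type) (p q : I → (Fin 4 → A) → A),
      (∀ i, PolyOp C 4 (p i)) ∧ (∀ i, PolyOp C 4 (q i)) ∧
      Delta A = {x | ∀ i, p i x = q i x} := by
  obtain ⟨d, hd, hMd⟩ := hM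
  refine ⟨{pq : (((Fin 4 → A) → A) × ((Fin 4 → A) → A)) //
      PolyOp C 4 pq.1 ∧ PolyOp C 4 pq.2 ∧ ∀ w ∈ Delta A, pq.1 w = pq.2 w},
    fun i => i.1.1, fun i => i.1.2, fun i => i.2.1, fun i => i.2.2.1, ?_⟩
  ext z
  constructor
  · intro hz i
    exact i.2.2.2 z hz
  · intro hz
    by_contra hnz
    have hne : z 0 ≠ z 1 ∧ z 2 ≠ z 3 := by
      constructor
      · intro h; exact hnz (Or.inl h)
      · intro h; exact hnz (Or.inr h)
    obtain ⟨a, b, hab, hcr⟩ := hcomm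
      (CongGen C (fun a b => a = z 0 ∧ b = z 1))
      (CongGen C (fun a b => a = z 2 ∧ b = z 3))
      (isCong_congGen _) (isCong_congGen _)
      ⟨z 0, z 1, hne.1, fun θ _ hr => hr _ _ ⟨rfl, rfl⟩⟩
      ⟨z 2, z 3, hne.2, fun θ _ hr => hr _ _ ⟨rfl, rfl⟩⟩
    have H : ∀ F G : (Fin 4 → A) → A, PolyOp C 4 F → PolyOp C 4 G →
        (∀ w ∈ Delta A, F w = G w) → F z = G z :=
      fun F G hF hG hFG => hz ⟨(F, G), hF, hG, hFG⟩
    exact hab (hcr (fun a b => a = b) isCong_eq (key_centralizes hd hMd z H))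

end Aux

/-- If an algebra has a Mal'cev polynomial and `[α, β]` is strictly above
equality for all congruences `α, β` strictly above equality, then the clone of
polynomial operations is equationally additive. -/
theorem stmt16 {A : Type} (C : Clone A) (hM : HasMalcevPoly C)
    (hcomm : ∀ α β : A → A → Prop, IsCong C α → IsCong C β →
      (∃ a b : A, a ≠ b ∧ α a b) → (∃ a b : A, a ≠ b ∧ β a b) →
      ∃ a b : A, a ≠ b ∧ CommRel C α β a b) :
    ∀ (n : ℕ) (X Y : Set (Fin n → A)),
      IsAlgSet (PolClone C).ops n X → IsAlgSet (PolClone C).ops n Y →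
      IsAlgSet (PolClone C).ops n (X ∪ Y) := by
  intro n X Y hX hY
  obtain ⟨I, p, q, hp, hq, hXe⟩ := hX
  obtain ⟨J, r, s, hr, hs, hYe⟩ := hY
  obtain ⟨K, P, Q, hPk, hQk, hDe⟩ := delta_alg hM hcomm
  subst hXe; subst hYe
  refine ⟨I × J × K,
    fun t x => P t.2.2 ![p t.1 x, q t.1 x, r t.2.1 x, s t.2.1 x],
    fun t x => Q t.2.2 ![p t.1 x, q t.1 x, r t.2.1 x, s t.2.1 x],
    fun t => polyComp4 (hPk t.2.2) (hp t.1) (hq t.1) (hr t.2.1) (hs t.2.1),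
    fun t => polyComp4 (hQk t.2.2) (hp t.1) (hq t.1) (hr t.2.1) (hs t.2.1), ?_⟩
  ext x
  simp only [Set.mem_union, Set.mem_setOf_eq]
  constructor
  · rintro (hx | hy) ⟨i, j, k⟩
    · have hmem : (![p i x, q i x, r j x, s j x]) ∈ Delta A := Or.inl (by simp [hx i])
      rw [hDe] at hmem
      exact hmem k
    · have hmem : (![p i x, q i x, r j x, s j x]) ∈ Delta A := Or.inr (by simp [hy j])
      rw [hDe] at hmem
      exact hmem k
  · intro h
    by_cases hx : ∀ i, p i x = q i x
    · exact Or.inl hx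
    · push_neg at hx
      obtain ⟨i0, hi0⟩ := hx
      refine Or.inr fun j => ?_
      have hmem : (![p i0 x, q i0 x, r j x, s j x]) ∈ Delta A := by
        rw [hDe]; exact fun k => h (i0, j, k)
      rcases hmem with h01 | h23
      · exact absurd (by simpa using h01) hi0
      · simpa using h23
end

section
/- Let A be an algebra with a Mal'cev polynomial such that every three-element subset of A^4 is an algebraic set with respect to the clone of polynomial operations of A. Then for all congruences α, β of A strictly above equality, the commutator [α, β] is strictly above equality. -/
section stmt17aux
variable {A : Type} {C : Clone A}

lemma polyOp_ext' {n : ℕ} {f g : (Fin n → A) → A} (hf : PolyOp C n f)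
    (h : ∀ x, f x = g x) : PolyOp C n g := (funext h : f = g) ▸ hf

lemma polyOp_d' {d : A → A → A → A}
    (hd : PolyOp C 3 (fun x : Fin 3 → A => d (x 0) (x 1) (x 2)))
    {m : ℕ} {f g h : (Fin m → A) → A} (hf : PolyOp C m f) (hg : PolyOp C m g)
    (hh : PolyOp C m h) : PolyOp C m (fun z => d (f z) (g z) (h z)) := by
  have := PolyOp.comp (g := ![f, g, h]) hd (by intro i; fin_cases i <;> assumption)
  exact polyOp_ext' this fun z => rfl

lemma polyOp_bin' {P : A → A → A}
    (hP : PolyOp C 2 (fun z : Fin 2 → A => P (z 0) (z 1)))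
    {m : ℕ} {f g : (Fin m → A) → A} (hf : PolyOp C m f) (hg : PolyOp C m g) :
    PolyOp C m (fun z => P (f z) (g z)) := by
  have := PolyOp.comp (g := ![f, g]) hP (by intro i; fin_cases i <;> assumption)
  exact polyOp_ext' this fun z => rfl

lemma polyOp_quat' {p : (Fin 4 → A) → A} (hp : PolyOp C 4 p) :
    PolyOp C 2 (fun z : Fin 2 → A => p ![z 0, z 1, z 0, z 1]) := by
  have := PolyOp.comp
    (g := ![fun z : Fin 2 → A => z 0, fun z => z 1, fun z => z 0, fun z => z 1])
    hp (by intro i; fin_cases i <;> exact PolyOp.proj _)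
  refine polyOp_ext' this fun z => ?_
  congr 1
  funext i; fin_cases i <;> rfl

lemma fin_append_pair' (x y : A) :
    (Fin.append (fun _ : Fin 1 => x) (fun _ : Fin 1 => y) : Fin (1+1) → A) = ![x, y] := by
  funext i; fin_cases i <;> rfl

/-- In a Mal'cev algebra, the term condition modulo equality implies the
two-term condition. -/
lemma two_term {d : A → A → A → A}
    (hdP : PolyOp C 3 (fun x : Fin 3 → A => d (x 0) (x 1) (x 2))) (hdM : IsMalcev d)
    {α β : A → A → Prop} (hEq : Centralizes C α β (fun x y => x = y))
    {a b u v : A} (hα : α a b) (hβ : β u v)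
    {P Q : A → A → A} (hP : PolyOp C 2 (fun z : Fin 2 → A => P (z 0) (z 1)))
    (hQ : PolyOp C 2 (fun z : Fin 2 → A => Q (z 0) (z 1)))
    (h1 : P a u = Q a u) (h2 : P a v = Q a v) (h3 : P b u = Q b u) :
    P b v = Q b v := by
  have dxyy : ∀ x y : A, d x y y = x := fun x y => (hdM x y).1
  have dxxy : ∀ x y : A, d x x y = y := fun x y => (hdM y x).2
  set K : (Fin 2 → A) → A :=
    fun z => d (d (P (z 0) (z 1)) (P (z 0) u) (Q (z 0) u)) (Q (z 0) (z 1)) (Q b v)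
    with hKdef
  have hK : PolyOp C 2 K := by
    refine polyOp_d' hdP (polyOp_d' hdP ?_ ?_ ?_) ?_ (PolyOp.const _)
    · exact polyOp_bin' hP (PolyOp.proj 0) (PolyOp.proj 1)
    · exact polyOp_bin' hP (PolyOp.proj 0) (PolyOp.const u)
    · exact polyOp_bin' hQ (PolyOp.proj 0) (PolyOp.const u)
    · exact polyOp_bin' hQ (PolyOp.proj 0) (PolyOp.proj 1)
  have hKval : ∀ x y : A,
      K (Fin.append (fun _ : Fin 1 => x) (fun _ : Fin 1 => y))
        = d (d (P x y) (P x u) (Q x u)) (Q x y) (Q b v) := by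
    intro x y
    rw [fin_append_pair']
    rfl
  have htc := hEq 1 1 K hK (fun _ => a) (fun _ => b) (fun _ => u) (fun _ => v)
      (fun _ => hα) (fun _ => hβ) ?_
  · rw [hKval, hKval] at htc
    simp only [h3, dxyy, dxxy] at htc
    exact htc.symm
  · show K _ = K _
    rw [hKval, hKval]
    simp only [h1, h2, dxyy, dxxy]

end stmt17aux

/-- If an algebra has a Mal'cev polynomial and every three-element subset of
`A^4` is algebraic with respect to the polynomial clone, then `[α, β]` is
strictly above equality for all congruences `α, β` strictly above equality. -/
theorem stmt17 {A : Type} (C : Clone A) (hM : HasMalcevPoly C)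
    (h3 : ∀ X : Set (Fin 4 → A), X.ncard = 3 → IsAlgSet (PolClone C).ops 4 X) :
    ∀ α β : A → A → Prop, IsCong C α → IsCong C β →
      (∃ a b : A, a ≠ b ∧ α a b) → (∃ a b : A, a ≠ b ∧ β a b) →
      ∃ a b : A, a ≠ b ∧ CommRel C α β a b := by
  intro α β hα hβ hA hB
  obtain ⟨a, b, hab, hαab⟩ := hA
  obtain ⟨u, v, huv, hβuv⟩ := hB
  by_contra hcon
  push_neg at hcon
  have hcomm : ∀ x y : A, CommRel C α β x y → x = y := by
    intro x y hxy
    by_contra hne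
    exact hcon x y hne hxy
  have hEq : Centralizes C α β (fun x y => x = y) := by
    intro m k p hp a' b' u' v' ha' hb' hpe
    apply hcomm
    intro η hη hc
    exact hc m k p hp a' b' u' v' ha' hb' (hpe ▸ hη.1.refl _)
  obtain ⟨d, hdP, hdM⟩ := hM
  have hdP' : PolyOp C 3 (fun x : Fin 3 → A => d (x 0) (x 1) (x 2)) := hdP
  set e : A → A → Fin 4 → A := fun x y => ![x, y, x, y] with he
  have hediff : ∀ x y x' y' : A, e x y = e x' y' → x = x' ∧ y = y' := by
    intro x y x' y' h
    exact ⟨congrFun h 0, congrFun h 1⟩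
  have hne1 : e a u ≠ e a v := fun h => huv (hediff _ _ _ _ h).2
  have hne2 : e a u ≠ e b u := fun h => hab (hediff _ _ _ _ h).1
  have hne3 : e a v ≠ e b u := fun h => hab (hediff _ _ _ _ h).1
  have hX3 : ({e a u, e a v, e b u} : Set (Fin 4 → A)).ncard = 3 := by
    rw [Set.ncard_insert_of_notMem (by simp [hne1, hne2]), Set.ncard_pair hne3]
  obtain ⟨I, p, q, hp, hq, hXeq⟩ := h3 _ hX3
  have hmem : ∀ w ∈ ({e a u, e a v, e b u} : Set (Fin 4 → A)), ∀ i, p i w = q i w := by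
    intro w hw
    rw [hXeq] at hw
    exact hw
  have key : ∀ i, p i (e b v) = q i (e b v) := by
    intro i
    have hPi : PolyOp C 2 (fun z : Fin 2 → A => p i (e (z 0) (z 1))) := polyOp_quat' (hp i)
    have hQi : PolyOp C 2 (fun z : Fin 2 → A => q i (e (z 0) (z 1))) := polyOp_quat' (hq i)
    exact two_term (P := fun x y => p i (e x y)) (Q := fun x y => q i (e x y))
      hdP' hdM hEq hαab hβuv hPi hQi
      (hmem _ (by left; rfl) i)
      (hmem _ (by right; left; rfl) i)
      (hmem _ (by right; right; rfl) i)
  have : e b v ∈ ({e a u, e a v, e b u} : Set (Fin 4 → A)) := by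
    rw [hXeq]
    exact key
  rcases this with h | h | h
  · exact hab (hediff _ _ _ _ h).1.symm
  · exact hab (hediff _ _ _ _ h).1.symm
  · exact huv (hediff _ _ _ _ h).2.symm
end

section
/- Let A and B be sets with A ⊆ B and A nonempty, A ≠ B. For each clone F on A, let Φ(F) be the clone on B of all operations g: B^n → B that preserve A and whose restriction to A^n lies in F. Then Φ is injective, and if F is equationally additive then Φ(F) is equationally additive. Consequently, there are at least as many equationally additive clones on B as on A. -/
/-- The extension `Φ(F)` of a clone `F` on a subset `A ⊆ B` to the clone on `B`
of all operations preserving `A` whose restriction to `A` lies in `F`. -/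
def extClone {B : Type} (A : Set B) (F : Clone A) : Clone B where
  ops n := {g | (∀ x : Fin n → B, (∀ i, x i ∈ A) → g x ∈ A) ∧
    ∃ f ∈ F.ops n, ∀ x : Fin n → A, (f x : B) = g fun i => ↑(x i)}
  proj_mem n i :=
    ⟨fun _ hx => hx i, fun x => x i, F.proj_mem n i, fun _ => rfl⟩
  comp_mem m n f g hf hg := by
    obtain ⟨hfP, F', hF', hFe⟩ := hf
    choose G hG hGe using fun i => (hg i).2
    refine ⟨fun x hx => hfP _ fun i => (hg i).1 x hx,
      fun y => F' fun i => G i y, F.comp_mem m n F' G hF' hG, fun x => ?_⟩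
    rw [hFe]
    congr 1
    funext i
    exact hGe i x

theorem Clone.ext' {A : Type} {F G : Clone A} (h : F.ops = G.ops) : F = G := by
  cases F; cases G; simpa using h

/-- If the clone is equationally additive then `Δ` is algebraic. -/
theorem deltaAlg_of_eqAdd {A : Type} (F : Clone A) (h : EqAdditive F.ops) :
    IsAlgSet F.ops 4 (Delta A) := by
  have h1 : IsAlgSet F.ops 4 {x : Fin 4 → A | x 0 = x 1} :=
    ⟨Unit, fun _ x => x 0, fun _ x => x 1, fun _ => F.proj_mem 4 0,
      fun _ => F.proj_mem 4 1, by ext x; simp⟩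
  have h2 : IsAlgSet F.ops 4 {x : Fin 4 → A | x 2 = x 3} :=
    ⟨Unit, fun _ x => x 2, fun _ x => x 3, fun _ => F.proj_mem 4 2,
      fun _ => F.proj_mem 4 3, by ext x; simp⟩
  have hu := h 4 _ _ h1 h2
  have he : Delta A = {x : Fin 4 → A | x 0 = x 1} ∪ {x : Fin 4 → A | x 2 = x 3} := by
    ext x; simp [Delta]
  rwa [he]

/-- Conversely, a clone with algebraic `Δ` is equationally additive. -/
theorem eqAdd_of_deltaAlg {Y : Type} (C : Clone Y) (h : IsAlgSet C.ops 4 (Delta Y)) :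
    EqAdditive C.ops := by
  classical
  obtain ⟨K, P, Q, hP, hQ, hD⟩ := h
  rintro n X X' ⟨I, p, q, hp, hq, rfl⟩ ⟨J, r, s, hr, hs, rfl⟩
  refine ⟨I × J × K,
    fun m x => P m.2.2 ![p m.1 x, q m.1 x, r m.2.1 x, s m.2.1 x],
    fun m x => Q m.2.2 ![p m.1 x, q m.1 x, r m.2.1 x, s m.2.1 x], ?_, ?_, ?_⟩
  · rintro ⟨i, j, k⟩
    exact C.comp_mem n 4 (P k)
      (fun l x => ![p i x, q i x, r j x, s j x] l) (hP k)
      (by intro l; fin_cases l <;> simpa using (by first | exact hp i | exact hq i | exact hr j | exact hs j))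
  · rintro ⟨i, j, k⟩
    exact C.comp_mem n 4 (Q k)
      (fun l x => ![p i x, q i x, r j x, s j x] l) (hQ k)
      (by intro l; fin_cases l <;> simpa using (by first | exact hp i | exact hq i | exact hr j | exact hs j))
  · ext x
    have hvD : ∀ i j, (p i x = q i x ∨ r j x = s j x) ↔
        ∀ k, P k ![p i x, q i x, r j x, s j x] = Q k ![p i x, q i x, r j x, s j x] := by
      intro i j
      have h1 : (![p i x, q i x, r j x, s j x] ∈ Delta Y) ↔
          (p i x = q i x ∨ r j x = s j x) := by
        simp [Delta]
      rw [← h1, hD]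
      exact Iff.rfl
    simp only [Set.mem_union, Set.mem_setOf_eq]
    constructor
    · rintro (hX | hY) ⟨i, j, k⟩
      · exact ((hvD i j).1 (Or.inl (hX i))) k
      · exact ((hvD i j).1 (Or.inr (hY j))) k
    · intro hall
      by_cases hX : ∀ i, p i x = q i x
      · exact Or.inl hX
      · push_neg at hX
        obtain ⟨i0, hi0⟩ := hX
        refine Or.inr fun j => ?_
        have := (hvD i0 j).2 (fun k => hall ⟨i0, j, k⟩)
        tauto

open scoped Classical in
/-- Auxiliary extension of a quaternary operation on a subset. -/
noncomputable def extOp {B : Type} (A : Set B) (P : (Fin 4 → A) → A) (x : Fin 4 → B) : B :=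
  if h : ∀ l, x l ∈ A then ↑(P fun l => ⟨x l, h l⟩) else x 0

open scoped Classical in
/-- Auxiliary operation detecting `Δ_B` outside `A⁴`. -/
noncomputable def deltaTest {B : Type} (A : Set B) (c : B → B) (x : Fin 4 → B) : B :=
  if ∀ l, x l ∈ A then x 0 else if x ∈ Delta B then x 0 else c (x 0)

theorem extOp_mem {B : Type} (A : Set B) (F : Clone A) {P : (Fin 4 → A) → A}
    (hP : P ∈ F.ops 4) : extOp A P ∈ (extClone A F).ops 4 := by
  refine ⟨fun x hx => ?_, P, hP, fun x => ?_⟩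
  · rw [extOp, dif_pos hx]; exact (P _).2
  · rw [extOp, dif_pos (fun l => (x l).2)]

/-- `Δ_B` is algebraic for the extended clone whenever `Δ_A` is algebraic for `F`. -/
theorem deltaAlg_ext {B : Type} (A : Set B) (hne : A.Nonempty) (hpr : A ≠ Set.univ)
    (F : Clone A) (h : IsAlgSet F.ops 4 (Delta A)) :
    IsAlgSet (extClone A F).ops 4 (Delta B) := by
  classical
  obtain ⟨K, P, Q, hP, hQ, hD⟩ := h
  obtain ⟨a0, ha0⟩ := hne
  obtain ⟨b0, hb0⟩ : ∃ b, b ∉ A := by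
    by_contra hc; push_neg at hc; exact hpr (Set.eq_univ_iff_forall.2 hc)
  set c : B → B := fun b => if b = b0 then a0 else b0 with hc
  have hcne : ∀ b, c b ≠ b := by
    intro b
    show (if b = b0 then a0 else b0) ≠ b
    split_ifs with hbb
    · subst hbb; intro he; exact hb0 (he ▸ ha0)
    · exact fun he => hbb he.symm
  refine ⟨Option K,
    fun k => k.elim (fun x => x 0) (fun k => extOp A (P k)),
    fun k => k.elim (deltaTest A c) (fun k => extOp A (Q k)), ?_, ?_, ?_⟩
  · rintro (_ | k)
    · exact (extClone A F).proj_mem 4 0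
    · exact extOp_mem A F (hP k)
  · rintro (_ | k)
    · refine ⟨fun x hx => ?_, fun x => x 0, F.proj_mem 4 0, fun x => ?_⟩
      · simp only [Option.elim, deltaTest]
        rw [if_pos hx]; exact hx 0
      · simp only [Option.elim, deltaTest]
        rw [if_pos (fun l => (x l).2)]
    · exact extOp_mem A F (hQ k)
  · ext x
    simp only [Set.mem_setOf_eq]
    by_cases hA : ∀ l, x l ∈ A
    · have hlift : ((fun l => (⟨x l, hA l⟩ : A)) ∈ Delta A) ↔ x ∈ Delta B := by
        simp [Delta, Subtype.ext_iff]
      have hDk : ((fun l => (⟨x l, hA l⟩ : A)) ∈ Delta A) ↔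
          ∀ k, P k (fun l => ⟨x l, hA l⟩) = Q k (fun l => ⟨x l, hA l⟩) := by
        rw [hD]; exact Iff.rfl
      constructor
      · rintro hx (_ | k)
        · simp only [Option.elim, deltaTest]
          rw [if_pos hA]
        · simp only [Option.elim, extOp]
          rw [dif_pos hA, dif_pos hA]
          exact congrArg _ (hDk.1 (hlift.2 hx) k)
      · intro hall
        refine hlift.1 (hDk.2 fun k => ?_)
        have := hall (some k)
        simp only [Option.elim, extOp] at this
        rw [dif_pos hA, dif_pos hA] at this
        exact Subtype.coe_injective this
    · constructor
      · rintro hx (_ | k)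
        · simp only [Option.elim, deltaTest]
          rw [if_neg hA, if_pos hx]
        · simp only [Option.elim, extOp]
          rw [dif_neg hA, dif_neg hA]
      · intro hall
        have := hall none
        simp only [Option.elim, deltaTest] at this
        rw [if_neg hA] at this
        by_contra hx
        rw [if_neg hx] at this
        exact hcne (x 0) this.symm

theorem extClone_inj_aux {B : Type} (A : Set B) (a0 : A) {F1 F2 : Clone A}
    (h : (extClone A F1).ops = (extClone A F2).ops) (n : ℕ) :
    F1.ops n ⊆ F2.ops n := by
  classical
  intro f hf
  have hg1 : (fun x : Fin n → B =>
      if hx : ∀ i, x i ∈ A then (↑(f fun i => ⟨x i, hx i⟩) : B) else ↑a0)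
      ∈ (extClone A F1).ops n := by
    refine ⟨fun x hx => ?_, f, hf, fun x => ?_⟩
    · simp only [dif_pos hx]; exact (f _).2
    · simp only; rw [dif_pos (fun i => (x i).2)]
  rw [h] at hg1
  obtain ⟨_, f', hf', he⟩ := hg1
  have hff : f' = f := by
    funext x
    have := he x
    simp only at this
    rw [dif_pos (fun i => (x i).2)] at this
    exact Subtype.coe_injective this
  exact hff ▸ hf'

/-- For `∅ ≠ A ⊊ B`, the map `Φ = extClone A` is injective and preserves
equational additivity; consequently there are at least as many equationally
additive clones on `B` as on `A`. -/
theorem stmt18 {B : Type} (A : Set B) (hne : A.Nonempty) (hpr : A ≠ Set.univ) :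
    Function.Injective (extClone A) ∧
    (∀ F : Clone A, EqAdditive F.ops → EqAdditive (extClone A F).ops) ∧
    ∃ Ψ : {F : Clone A // EqAdditive F.ops} → {G : Clone B // EqAdditive G.ops},
      Function.Injective Ψ := by
  obtain ⟨a0, ha0⟩ := id hne
  have hinj : Function.Injective (extClone A) := by
    intro F1 F2 h
    apply Clone.ext'
    funext n
    exact Set.Subset.antisymm
      (extClone_inj_aux A ⟨a0, ha0⟩ (congrArg Clone.ops h) n)
      (extClone_inj_aux A ⟨a0, ha0⟩ (congrArg Clone.ops h.symm) n)
  have hadd : ∀ F : Clone A, EqAdditive F.ops → EqAdditive (extClone A F).ops := by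
    intro F hF
    exact eqAdd_of_deltaAlg (extClone A F)
      (deltaAlg_ext A hne hpr F (deltaAlg_of_eqAdd F hF))
  refine ⟨hinj, hadd, fun F => ⟨extClone A F.1, hadd F.1 F.2⟩, ?_⟩
  intro F G h
  exact Subtype.ext (hinj (congrArg Subtype.val h))
end
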